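/- Let H, K > 0 with K ≥ H, let β ∈ ℝ, and set h = ln H, k = ln K. Then for every ξ ∈ ℂ with Im ξ > 1 − β, the integral ∫_ℝ e^{−i·x·ξ} · H^{−β}·e^{β·x}·(H²·e^{−x} − K)_+ · 1_{(−∞,h]}(x) dx converges absolutely and equals H^{β}·K^{1−β}·e^{−i·(2h−k)·ξ} / ((−iξ + β − 1)·(−iξ + β)). (The Fourier transform in log-price of the payoff G_ex(S) = (S/H)^β·(H²/S − K)_+·1_{S ≤ H} of the exotic European option used in semi-static hedging of the down-and-in call with barrier H and strike K.) -/

import Mathlib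

open MeasureTheory Set Filter Topology

lemma exp_mul_integrableOn_Iic {b : ℝ} (hb : 0 < b) (a : ℝ) :
    IntegrableOn (fun x : ℝ => Real.exp (b * x)) (Iic a) := by
  rw [← (Measure.measurePreserving_neg (volume : Measure ℝ)).integrableOn_comp_preimage
      (Homeomorph.neg ℝ).measurableEmbedding]
  simp only [Function.comp_def, neg_preimage, neg_Iic, mul_neg]
  rw [integrableOn_Ici_iff_integrableOn_Ioi]
  simpa [neg_mul] using exp_neg_integrableOn_Ioi (-a) hb

lemma cexp_integrableOn_Iic {c : ℂ} (hc : 0 < c.re) (a : ℝ) :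
    IntegrableOn (fun x : ℝ => Complex.exp (c * x)) (Iic a) := by
  refine (exp_mul_integrableOn_Iic hc a).mono' ?_ ?_
  · exact (Complex.continuous_exp.comp
      (continuous_const.mul Complex.continuous_ofReal)).aestronglyMeasurable
  · filter_upwards with x
    rw [Complex.norm_exp]
    simp [Complex.mul_re]

lemma integral_cexp_Iic {c : ℂ} (hc : 0 < c.re) (a : ℝ) :
    ∫ x in Iic a, Complex.exp (c * x) = Complex.exp (c * a) / c := by
  have hc0 : c ≠ 0 := fun h => by simp [h] at hc
  refine tendsto_nhds_unique
    (intervalIntegral_tendsto_integral_Iic a (cexp_integrableOn_Iic hc a) tendsto_id) ?_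
  have key : ∀ y : ℝ, ∫ x in y..a, Complex.exp (c * x)
      = (Complex.exp (c * a) - Complex.exp (c * y)) / c :=
    fun y => integral_exp_mul_complex hc0
  simp only [id, key]
  have h0 : Tendsto (fun y : ℝ => Complex.exp (c * y)) atBot (𝓝 0) := by
    rw [tendsto_zero_iff_norm_tendsto_zero]
    have hn : (fun y : ℝ => ‖Complex.exp (c * y)‖) = fun y => Real.exp (c.re * y) := by
      funext y; rw [Complex.norm_exp]; simp [Complex.mul_re]
    rw [hn]
    exact Real.tendsto_exp_atBot.comp (tendsto_id.const_mul_atBot hc)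
  simpa using (tendsto_const_nhds.sub h0).div_const c

/-- The Fourier transform in log-price of the payoff
`G_ex(S) = (S/H)^β·(H²/S - K)_+·1_{S ≤ H}` of the exotic European option used in semi-static
hedging of the down-and-in call with barrier `H` and strike `K ≥ H`. -/
theorem stmt_8 (H K β : ℝ) (hH : 0 < H) (hHK : H ≤ K) :
    ∀ ξ : ℂ, 1 - β < ξ.im →
      Integrable (fun x : ℝ =>
        Complex.exp (-(Complex.I * x * ξ)) *
          ((Set.indicator (Iic (Real.log H))
            (fun y => H ^ (-β) * Real.exp (β * y) * max (H ^ 2 * Real.exp (-y) - K) 0) x : ℝ) : ℂ)) ∧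
      (∫ x : ℝ, Complex.exp (-(Complex.I * x * ξ)) *
          ((Set.indicator (Iic (Real.log H))
            (fun y => H ^ (-β) * Real.exp (β * y) * max (H ^ 2 * Real.exp (-y) - K) 0) x : ℝ) : ℂ))
        = ((H ^ β : ℝ) : ℂ) * ((K ^ (1 - β) : ℝ) : ℂ) *
            Complex.exp (-(Complex.I * ((2 * Real.log H - Real.log K : ℝ) : ℂ) * ξ)) /
            ((-(Complex.I * ξ) + (β : ℂ) - 1) * (-(Complex.I * ξ) + (β : ℂ))) := by
  intro ξ hξ
  have hK : 0 < K := lt_of_lt_of_le hH hHK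
  set a : ℝ := 2 * Real.log H - Real.log K with ha
  set c : ℂ := (β : ℂ) - Complex.I * ξ with hc
  have hc2 : -(Complex.I * ξ) + (β : ℂ) = c := by rw [hc]; ring
  have hcre : 1 < c.re := by
    simp only [hc, Complex.sub_re, Complex.ofReal_re, Complex.mul_re, Complex.I_re,
      Complex.I_im, zero_mul, one_mul, zero_sub, sub_neg_eq_add]
    linarith
  have hc0 : 0 < c.re := by linarith
  have hc1 : 0 < (c - 1).re := by
    simp only [Complex.sub_re, Complex.one_re]; linarith
  have hcne : c ≠ 0 := fun h => by simp [h] at hc0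
  have hc1ne : c - 1 ≠ 0 := fun h => by simp [h] at hc1
  have haH : a ≤ Real.log H := by
    have : Real.log H ≤ Real.log K := Real.log_le_log hH hHK
    rw [ha]; linarith
  have hexpa : H ^ 2 * Real.exp (-a) = K := by
    rw [ha, show -(2 * Real.log H - Real.log K) = Real.log K - (Real.log H + Real.log H) by ring,
      Real.exp_sub, Real.exp_add, Real.exp_log hK, Real.exp_log hH, pow_two]
    field_simp
  set g : ℝ → ℂ := Set.indicator (Iic a) (fun x : ℝ =>
    ((H ^ (-β) : ℝ) : ℂ) * (((H ^ 2 : ℝ) : ℂ) * Complex.exp ((c - 1) * x)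
      - ((K : ℝ) : ℂ) * Complex.exp (c * x))) with hg
  have hfg : (fun x : ℝ =>
      Complex.exp (-(Complex.I * x * ξ)) *
        ((Set.indicator (Iic (Real.log H))
          (fun y => H ^ (-β) * Real.exp (β * y) * max (H ^ 2 * Real.exp (-y) - K) 0) x : ℝ) : ℂ))
      = g := by
    funext x
    by_cases hx : x ≤ a
    · have hxH : x ∈ Iic (Real.log H) := le_trans hx haH
      have hge : 0 ≤ H ^ 2 * Real.exp (-x) - K := by
        have h1 : Real.exp (-a) ≤ Real.exp (-x) := Real.exp_le_exp.2 (by linarith)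
        nlinarith [mul_le_mul_of_nonneg_left h1 (le_of_lt (pow_pos hH 2))]
      rw [hg, Set.indicator_of_mem hxH, Set.indicator_of_mem (mem_Iic.2 hx),
        max_eq_left hge]
      have e1 : Complex.exp (c * x)
          = Complex.exp (-(Complex.I * x * ξ)) * ((Real.exp (β * x) : ℝ) : ℂ) := by
        rw [Complex.ofReal_exp, ← Complex.exp_add]; congr 1; rw [hc]; push_cast; ring
      have e2 : Complex.exp ((c - 1) * x)
          = Complex.exp (-(Complex.I * x * ξ)) * ((Real.exp (β * x) : ℝ) : ℂ)
            * ((Real.exp (-x) : ℝ) : ℂ) := by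
        rw [Complex.ofReal_exp, Complex.ofReal_exp, ← Complex.exp_add, ← Complex.exp_add]
        congr 1; rw [hc]; push_cast; ring
      rw [e1, e2]; push_cast; ring
    · have hmax : max (H ^ 2 * Real.exp (-x) - K) 0 = 0 := by
        have h1 : Real.exp (-x) ≤ Real.exp (-a) := Real.exp_le_exp.2 (by linarith)
        refine max_eq_right ?_
        nlinarith [mul_le_mul_of_nonneg_left h1 (le_of_lt (pow_pos hH 2))]
      rw [hg, Set.indicator_of_notMem (s := Iic a) (by simpa using hx)]
      rw [Set.indicator_apply]
      split_ifs <;> simp [hmax]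
  have hgi : Integrable g := by
    rw [hg, integrable_indicator_iff measurableSet_Iic]
    exact ((((cexp_integrableOn_Iic hc1 a).const_mul _).sub
      ((cexp_integrableOn_Iic hc0 a).const_mul _)).const_mul _)
  refine ⟨hfg ▸ hgi, ?_⟩
  rw [hfg, hg, integral_indicator measurableSet_Iic, integral_const_mul,
    integral_sub ((cexp_integrableOn_Iic hc1 a).const_mul _)
      ((cexp_integrableOn_Iic hc0 a).const_mul _),
    integral_const_mul, integral_const_mul, integral_cexp_Iic hc1 a, integral_cexp_Iic hc0 a,
    hc2]
  -- algebra
  have e1 : Complex.exp (c * a)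
      = ((Real.exp (β * a) : ℝ) : ℂ) * Complex.exp (-(Complex.I * (a : ℂ) * ξ)) := by
    rw [Complex.ofReal_exp, ← Complex.exp_add]; congr 1; rw [hc]; push_cast; ring
  have e2 : Complex.exp ((c - 1) * a)
      = ((Real.exp ((β - 1) * a) : ℝ) : ℂ) * Complex.exp (-(Complex.I * (a : ℂ) * ξ)) := by
    rw [Complex.ofReal_exp, ← Complex.exp_add]; congr 1; rw [hc]; push_cast; ring
  have r1 : H ^ 2 * Real.exp ((β - 1) * a) = K * Real.exp (β * a) := by
    rw [show (β - 1) * a = β * a + -a by ring, Real.exp_add, ← mul_assoc,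
      mul_comm (H ^ 2) (Real.exp (β * a)), mul_assoc, hexpa, mul_comm]
  have r2 : H ^ (-β) * (K * Real.exp (β * a)) = H ^ β * K ^ (1 - β) := by
    have e3 : Real.exp (β * a) = H ^ (2 * β) * K ^ (-β) := by
      rw [ha, Real.rpow_def_of_pos hH, Real.rpow_def_of_pos hK, ← Real.exp_add]
      congr 1; ring
    have h1 : H ^ (-β) * H ^ (2 * β) = H ^ β := by
      rw [← Real.rpow_add hH]; congr 1; ring
    have h2 : K * K ^ (-β) = K ^ (1 - β) := by
      rw [show (1:ℝ) - β = 1 + -β by ring, Real.rpow_add hK, Real.rpow_one]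
    rw [e3, show H ^ (-β) * (K * (H ^ (2*β) * K ^ (-β)))
      = (H ^ (-β) * H ^ (2*β)) * (K * K ^ (-β)) from by ring, h1, h2]
  have R1 : ((H ^ 2 : ℝ) : ℂ) * ((Real.exp ((β - 1) * a) : ℝ) : ℂ)
      = ((K : ℝ) : ℂ) * ((Real.exp (β * a) : ℝ) : ℂ) := by exact_mod_cast r1
  have R2 : ((H ^ (-β) : ℝ) : ℂ) * ((K : ℂ) * ((Real.exp (β * a) : ℝ) : ℂ))
      = ((H ^ β : ℝ) : ℂ) * ((K ^ (1 - β) : ℝ) : ℂ) := by exact_mod_cast r2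
  rw [e1, e2]
  set E := Complex.exp (-(Complex.I * (a : ℂ) * ξ)) with hE
  have hinv : (1:ℂ)/(c-1) - 1/c = 1/((c-1)*c) := by
    field_simp
    ring
  calc ((H ^ (-β) : ℝ) : ℂ) * (((H ^ 2 : ℝ) : ℂ) * (((Real.exp ((β-1)*a) : ℝ) : ℂ) * E / (c-1))
        - ((K : ℝ) : ℂ) * (((Real.exp (β*a) : ℝ) : ℂ) * E / c))
      = (((H ^ 2 : ℝ) : ℂ) * ((Real.exp ((β-1)*a) : ℝ) : ℂ))
          * (((H ^ (-β) : ℝ) : ℂ) * E * (1/(c-1)))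
        - (((K : ℝ) : ℂ) * ((Real.exp (β*a) : ℝ) : ℂ))
          * (((H ^ (-β) : ℝ) : ℂ) * E * (1/c)) := by ring
    _ = (((K : ℝ) : ℂ) * ((Real.exp (β*a) : ℝ) : ℂ))
          * (((H ^ (-β) : ℝ) : ℂ) * E * (1/(c-1)))
        - (((K : ℝ) : ℂ) * ((Real.exp (β*a) : ℝ) : ℂ))
          * (((H ^ (-β) : ℝ) : ℂ) * E * (1/c)) := by rw [R1]
    _ = (((H ^ (-β) : ℝ) : ℂ) * (((K : ℝ) : ℂ) * ((Real.exp (β*a) : ℝ) : ℂ)))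
          * E * (1/(c-1) - 1/c) := by ring
    _ = (((H ^ β : ℝ) : ℂ) * ((K ^ (1 - β) : ℝ) : ℂ)) * E * (1/(c-1) - 1/c) := by rw [R2]
    _ = ((H ^ β : ℝ) : ℂ) * ((K ^ (1 - β) : ℝ) : ℂ) * E / ((c-1)*c) := by
        rw [hinv]; ring
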